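/- Let q be an odd prime power, ℓ = ord_2(q−1) ≥ 2, and α ∈ F_q× of order 2^ℓ. Then the equation x^{q^2} = α^2 x has exactly q^2 − 1 nonzero solutions in F_{q^{2^ℓ}}, and no nonzero solutions in F_{q^{2^d}} for 2 ≤ d < ℓ. -/

import Mathlib

lemma sq_sub_one_fac (a : ℕ) (ha : 1 ≤ a) : a ^ 2 - 1 = (a - 1) * (a + 1) := by
  obtain ⟨m, rfl⟩ := Nat.exists_eq_add_of_le ha
  have h3 : 1 + m - 1 = m := by omega
  rw [h3]
  have : (1 + m) ^ 2 = m * (1 + m + 1) + 1 := by ring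
  omega

lemma aux_dvd (q : ℕ) (hq : Odd q) (l : ℕ) :
    2 ^ l * (q ^ 2 - 1) ∣ q ^ 2 ^ (l + 1) - 1 := by
  induction l with
  | zero => simpa using dvd_refl _
  | succ l ih =>
    have hq0 : 0 < q := hq.pos
    have h1 : (1:ℕ) ≤ q ^ 2 ^ (l+1) := Nat.one_le_pow _ _ hq0
    have key : q ^ 2 ^ (l+2) - 1 = (q ^ 2 ^ (l+1) - 1) * (q ^ 2 ^ (l+1) + 1) := by
      have h2 : q ^ 2 ^ (l+2) = (q ^ 2 ^ (l+1)) ^ 2 := by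
        rw [← pow_mul]; ring_nf
      rw [h2, sq_sub_one_fac _ h1]
    have heven : 2 ∣ q ^ 2 ^ (l+1) + 1 := (hq.pow).add_one.two_dvd
    have hh := mul_dvd_mul ih heven
    rw [← key] at hh
    have e : 2 ^ (l+1) * (q ^ 2 - 1) = 2 ^ l * (q ^ 2 - 1) * 2 := by ring
    rwa [e]

theorem stmt_14 (q ℓ : ℕ) (hq : Odd q) (hq1 : 1 < q)
    (hqpp : ∃ p k : ℕ, p.Prime ∧ 0 < k ∧ q = p ^ k)
    (hℓ : padicValNat 2 (q - 1) = ℓ) (hℓ2 : 2 ≤ ℓ)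
    (K : Type*) [Field K] [Fintype K] [DecidableEq K]
    (hcard : Fintype.card K = q ^ 2 ^ ℓ)
    (α : K) (hαq : α ^ q = α) (hord : orderOf α = 2 ^ ℓ) :
    (Finset.univ.filter fun x : K => x ≠ 0 ∧ x ^ q ^ 2 = α ^ 2 * x).card =
        q ^ 2 - 1 ∧
      ∀ x : K, x ≠ 0 → x ^ q ^ 2 = α ^ 2 * x →
        ∀ d, 2 ≤ d → d < ℓ → x ^ q ^ 2 ^ d ≠ x := by
  classical
  have hq2 : 1 < q ^ 2 := Nat.one_lt_pow (by norm_num) hq1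
  set n : ℕ := q ^ 2 - 1 with hn
  have hn0 : 0 < n := by omega
  have hα0 : α ≠ 0 := by
    intro h
    have h1 : α ^ 2 ^ ℓ = 1 := by rw [← hord]; exact pow_orderOf_eq_one α
    rw [h, zero_pow (Nat.pos_of_ne_zero (by positivity)).ne'] at h1
    exact zero_ne_one h1
  -- α as a unit
  set u : Kˣ := Units.mk0 α hα0 with hu
  have huval : (u : K) = α := rfl
  have huord : orderOf u = 2 ^ ℓ := by rw [← orderOf_units, huval, hord]
  -- cardinality of Kˣ
  set N : ℕ := q ^ 2 ^ ℓ - 1 with hN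
  have hNcard : Fintype.card Kˣ = N := by
    rw [Fintype.card_units, hcard]
  have hNpos : 0 < N := by
    have : 1 < q ^ 2 ^ ℓ := Nat.one_lt_pow (by positivity) hq1
    omega
  -- divisibility
  have hdvd : 2 ^ (ℓ - 1) * n ∣ N := by
    have h := aux_dvd q hq (ℓ - 1)
    rwa [Nat.sub_add_cancel (by omega)] at h
  have hnN : n ∣ N := (dvd_mul_left n _).trans hdvd
  have h2N : 2 ^ (ℓ - 1) ∣ N := (dvd_mul_right _ n).trans hdvd
  -- generator
  obtain ⟨g, hg⟩ := IsCyclic.exists_generator (α := Kˣ)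
  have hgord : orderOf g = N := by
    rw [orderOf_eq_card_of_forall_mem_zpowers hg, Nat.card_eq_fintype_card, hNcard]
  -- order of u ^ 2
  have hu2ord : orderOf (u ^ 2) = 2 ^ (ℓ - 1) := by
    rw [orderOf_pow, huord]
    have hgcd : Nat.gcd (2 ^ ℓ) 2 = 2 := by
      rw [Nat.gcd_comm]
      exact Nat.gcd_eq_left (dvd_pow_self 2 (by omega))
    rw [hgcd, show (2:ℕ) ^ ℓ = 2 ^ (ℓ - 1) * 2 by rw [← pow_succ]; congr 1; omega]
    exact Nat.mul_div_cancel _ (by norm_num)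
  -- express u ^ 2 as a power of g
  obtain ⟨k, hk'⟩ := (isOfFinOrder_of_finite g).mem_powers_iff_mem_zpowers.mpr (hg (u ^ 2))
  have hk : g ^ k = u ^ 2 := hk'
  -- n divides k
  have hgcdk : Nat.gcd N k = N / 2 ^ (ℓ - 1) := by
    have h1 : orderOf (g ^ k) = 2 ^ (ℓ - 1) := by rw [hk, hu2ord]
    rw [orderOf_pow, hgord] at h1
    have h2 : Nat.gcd N k ∣ N := Nat.gcd_dvd_left _ _
    have h3 : N = Nat.gcd N k * 2 ^ (ℓ - 1) := by
      rw [← h1, Nat.mul_div_cancel' h2]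
    exact (Nat.div_eq_of_eq_mul_left (pow_pos two_pos _) h3).symm
  have hnk : n ∣ k := by
    have h1 : n ∣ N / 2 ^ (ℓ - 1) :=
      (Nat.dvd_div_iff_mul_dvd h2N).mpr hdvd
    exact (hgcdk ▸ h1).trans (Nat.gcd_dvd_right N k)
  obtain ⟨m, rfl⟩ := hnk
  -- particular solution x₀
  set x₀ : Kˣ := g ^ m with hx₀
  have hx₀n : (x₀ : K) ^ n = α ^ 2 := by
    have : x₀ ^ n = u ^ 2 := by
      rw [hx₀, ← pow_mul, mul_comm m n, hk]
    simpa [huval] using congrArg (Units.val : Kˣ → K) this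
  -- primitive n-th root of unity
  set ζ : Kˣ := g ^ (N / n) with hζdef
  have hζord : orderOf ζ = n := by
    rw [hζdef, orderOf_pow, hgord, Nat.gcd_eq_right (Nat.div_dvd_of_dvd hnN),
      Nat.div_div_self hnN hNpos.ne']
  have hζprim : IsPrimitiveRoot ((ζ : K)) n := by
    rw [IsPrimitiveRoot.coe_units_iff]
    have := IsPrimitiveRoot.orderOf ζ
    rwa [hζord] at this
  -- rewrite the equation
  have hq2n : q ^ 2 = n + 1 := by omega
  have hα20 : α ^ 2 ≠ 0 := pow_ne_zero _ hα0
  have hfilter : (Finset.univ.filter fun x : K => x ≠ 0 ∧ x ^ q ^ 2 = α ^ 2 * x)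
      = Finset.univ.filter (fun x : K => x ^ n = α ^ 2) := by
    ext x
    simp only [Finset.mem_filter, Finset.mem_univ, true_and]
    constructor
    · rintro ⟨hx0, hx⟩
      rw [hq2n, pow_succ] at hx
      exact mul_right_cancel₀ hx0 hx
    · intro hx
      have hx0 : x ≠ 0 := by
        intro h; rw [h, zero_pow hn0.ne'] at hx; exact hα20 hx.symm
      exact ⟨hx0, by rw [hq2n, pow_succ, hx]⟩
  -- the solution set is a coset of the n-th roots of unity
  have himage : Finset.univ.filter (fun x : K => x ^ n = α ^ 2)
      = (Polynomial.nthRootsFinset n (1 : K)).image (fun z => (x₀ : K) * z) := by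
    ext y
    simp only [Finset.mem_filter, Finset.mem_univ, true_and, Finset.mem_image,
      Polynomial.mem_nthRootsFinset hn0 (1 : K)]
    constructor
    · intro hy
      refine ⟨((x₀⁻¹ : Kˣ) : K) * y, ?_, ?_⟩
      · rw [mul_pow, hy]
        have : ((x₀⁻¹ : Kˣ) : K) ^ n = (α ^ 2)⁻¹ := by
          rw [← Units.val_pow_eq_pow_val, inv_pow, ← hx₀n, Units.val_inv_eq_inv_val,
            Units.val_pow_eq_pow_val]
        rw [this, inv_mul_cancel₀ hα20]
      · rw [← mul_assoc, ← Units.val_mul, mul_inv_cancel, Units.val_one, one_mul]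
    · rintro ⟨z, hz, rfl⟩
      rw [mul_pow, hz, hx₀n, mul_one]
  constructor
  · rw [hfilter, himage,
      Finset.card_image_of_injective _ (mul_right_injective₀ x₀.ne_zero),
      hζprim.card_nthRootsFinset]
  -- second part
  · intro x hx0 hx d hd2 hdl
    have hαpow : ∀ e : ℕ, α ^ q ^ e = α := by
      intro e
      induction e with
      | zero => simp
      | succ e ih => rw [pow_succ, pow_mul, ih, hαq]
    have key : ∀ e : ℕ, 1 ≤ e → x ^ q ^ 2 ^ e = α ^ 2 ^ e * x := by
      intro e he
      induction e with
      | zero => omega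
      | succ e ih =>
        rcases Nat.eq_or_lt_of_le he with he1 | he1
        · rw [← he1] at *
          simpa using hx
        · have ihe := ih (by omega)
          have h1 : q ^ 2 ^ (e + 1) = q ^ 2 ^ e * q ^ 2 ^ e := by
            rw [← pow_add]; congr 1; omega
          rw [h1, pow_mul, ihe, mul_pow, ihe, ← pow_mul, mul_comm (2 ^ e) (q ^ 2 ^ e),
            pow_mul, hαpow, ← mul_assoc, ← pow_add, ← two_mul, ← pow_succ']
    intro hcontra
    have h1 := key d (by omega)
    rw [hcontra] at h1
    have h2 : α ^ 2 ^ d = 1 := by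
      have := mul_right_cancel₀ hx0 (h1.symm.trans (one_mul x).symm)
      exact this
    have h3 : orderOf α ∣ 2 ^ d := orderOf_dvd_of_pow_eq_one h2
    rw [hord] at h3
    have := (Nat.pow_dvd_pow_iff_le_right (by norm_num)).mp h3
    omega
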